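/- Let 𝒩 be a unit-rate Poisson process and T > 0. Then with probability one, for every γ ∈ [0, 1/2), sup_{t ∈ [0, T]} n^γ |𝒩(n t)/n − t| → 0 as n → ∞. -/

import Mathlib

open MeasureTheory ProbabilityTheory Filter Real
open scoped NNReal ENNReal

section AuxSLLN

lemma summable_exp_neg_K_rpow {K δ : ℝ} (hK : 0 < K) (hδ : 0 < δ) :
    Summable (fun j : ℕ => Real.exp (-(K * (j : ℝ) ^ δ))) := by
  rw [← summable_nat_add_iff 1]
  set m : ℕ := ⌈2 / δ⌉₊ + 1 with hm
  have hm2 : 2 ≤ δ * m := by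
    have h1 : 2 / δ ≤ (m : ℝ) := by
      calc (2/δ : ℝ) ≤ ⌈2/δ⌉₊ := Nat.le_ceil _
      _ ≤ m := by exact_mod_cast Nat.le_succ _
    calc (2:ℝ) = δ * (2/δ) := by field_simp
    _ ≤ δ * m := by nlinarith
  have hsum : Summable (fun j : ℕ => ((m.factorial : ℝ) / K ^ m) * (1 / ((j:ℝ)+1) ^ 2)) := by
    apply Summable.mul_left
    have h0 : Summable (fun j : ℕ => 1 / ((j:ℝ)) ^ 2) := by
      rw [Real.summable_one_div_nat_pow]; norm_num
    have h1 := (summable_nat_add_iff 1).mpr h0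
    refine h1.congr fun j => by push_cast; ring_nf
  refine Summable.of_nonneg_of_le (fun j => (Real.exp_pos _).le) (fun j => ?_) hsum
  have hj1 : (1:ℝ) ≤ (j:ℝ) + 1 := by have := Nat.cast_nonneg (α := ℝ) j; linarith
  set x : ℝ := (j:ℝ) + 1 with hxdef
  have hx0 : (0:ℝ) < x := by positivity
  have hx : (0:ℝ) ≤ K * x ^ δ := by positivity
  have hexp : (K * x ^ δ) ^ m / (m.factorial : ℝ) ≤ Real.exp (K * x ^ δ) := by
    calc (K * x ^ δ) ^ m / (m.factorial : ℝ)
        ≤ ∑ i ∈ Finset.range (m+1), (K * x ^ δ) ^ i / i.factorial :=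
          Finset.single_le_sum (f := fun i => (K * x ^ δ) ^ i / (i.factorial : ℝ))
            (fun i _ => by positivity) (Finset.self_mem_range_succ m)
    _ ≤ Real.exp _ := Real.sum_le_exp_of_nonneg hx _
  have hpow : x ^ (2:ℕ) ≤ (x ^ δ) ^ m := by
    rw [← Real.rpow_natCast (x ^ δ) m, ← Real.rpow_mul hx0.le, ← Real.rpow_natCast x 2]
    exact Real.rpow_le_rpow_of_exponent_le hj1 (by exact_mod_cast hm2)
  have key : K ^ m * x ^ (2:ℕ) ≤ Real.exp (K * x ^ δ) * (m.factorial : ℝ) := by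
    have h2 : K ^ m * x ^ (2:ℕ) ≤ (K * x ^ δ) ^ m := by
      rw [mul_pow]
      have : (0:ℝ) ≤ K ^ m := by positivity
      nlinarith [pow_nonneg hx0.le 2]
    refine h2.trans ?_
    rw [← div_le_iff₀ (by positivity : (0:ℝ) < (m.factorial : ℝ))]
    exact hexp
  have hfac : (0:ℝ) < (m.factorial : ℝ) := by positivity
  have hKm : (0:ℝ) < K ^ m := by positivity
  have hcast : ((j+1 : ℕ) : ℝ) = x := by push_cast; rfl
  rw [hcast, Real.exp_neg, inv_le_comm₀ (Real.exp_pos _) (by positivity)]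
  have hgoal : ((m.factorial : ℝ) / K ^ m * (1 / x ^ 2))⁻¹ = K ^ m * x ^ (2:ℕ) / (m.factorial:ℝ) := by
    field_simp
  rw [hgoal, div_le_iff₀ hfac]
  exact key

lemma poisson_chernoff (r : ℝ≥0) (u c : ℝ) :
    poissonMeasure r {k : ℕ | c ≤ u * (k : ℝ)} ≤
      ENNReal.ofReal (Real.exp ((r : ℝ) * (Real.exp u - 1) - c)) := by
  set S : Set ℕ := {k : ℕ | c ≤ u * (k : ℝ)} with hS
  rw [poissonMeasure, Measure.sum_apply _ (MeasurableSet.of_discrete (s := S))]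
  set g : ℕ → ℝ :=
    fun k => (Real.exp (-c) * Real.exp (-(r:ℝ))) * (((r:ℝ) * Real.exp u) ^ k / k.factorial)
    with hgdef
  have hg : ∀ k : ℕ, 0 ≤ g k := fun k => by positivity
  have hhs : HasSum g ((Real.exp (-c) * Real.exp (-(r:ℝ))) * Real.exp ((r:ℝ) * Real.exp u)) := by
    have h := (NormedSpace.expSeries_div_hasSum_exp ((r:ℝ) * Real.exp u)).mul_left
      (Real.exp (-c) * Real.exp (-(r:ℝ)))
    rwa [← Real.exp_eq_exp_ℝ] at h
  have hstep : ∀ k : ℕ, (ENNReal.ofReal (Real.exp (-(r:ℝ)) * (r:ℝ) ^ k / k.factorial) •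
      Measure.dirac k) S ≤ ENNReal.ofReal (g k) := by
    intro k
    rw [Measure.smul_apply, Measure.dirac_apply' _ (MeasurableSet.of_discrete (s := S)), smul_eq_mul]
    by_cases hk : k ∈ S
    · rw [Set.indicator_of_mem hk, Pi.one_apply, mul_one]
      apply ENNReal.ofReal_le_ofReal
      have hck : c ≤ u * k := hk
      have h1 : (1:ℝ) ≤ Real.exp (u * k - c) := Real.one_le_exp (by linarith)
      have h2 : g k = (Real.exp (-(r:ℝ)) * (r:ℝ) ^ k / k.factorial) * Real.exp (u * k - c) := by
        simp only [hgdef]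
        rw [mul_pow, ← Real.exp_nat_mul, Real.exp_sub, Real.exp_neg c, mul_comm ((k:ℕ):ℝ) u]
        field_simp
      rw [h2]
      have hnn : 0 ≤ Real.exp (-(r:ℝ)) * (r:ℝ) ^ k / k.factorial := by positivity
      nlinarith
    · rw [Set.indicator_of_notMem hk, mul_zero]; exact zero_le
  calc _ ≤ ∑' k, ENNReal.ofReal (g k) :=
        ENNReal.tsum_le_tsum hstep
  _ = ENNReal.ofReal (∑' k, g k) := (ENNReal.ofReal_tsum_of_nonneg hg hhs.summable).symm
  _ = _ := by
        rw [hhs.tsum_eq, ← Real.exp_add, ← Real.exp_add]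
        congr 1
        ring

lemma poisson_two_sided (r : ℝ≥0) (x u : ℝ) (hu0 : 0 ≤ u) (hu1 : u ≤ 1) :
    poissonMeasure r {k : ℕ | x ≤ |(k : ℝ) - (r : ℝ)|} ≤
      ENNReal.ofReal (2 * Real.exp ((r : ℝ) * u ^ 2 - u * x)) := by
  have hsub : {k : ℕ | x ≤ |(k : ℝ) - (r : ℝ)|} ⊆
      {k : ℕ | u * ((r:ℝ) + x) ≤ u * (k : ℝ)} ∪ {k : ℕ | (-u) * ((r:ℝ) - x) ≤ (-u) * (k : ℝ)} := by
    intro k hk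
    have hk' : x ≤ |(k : ℝ) - (r : ℝ)| := hk
    rcases le_abs.mp hk' with h | h
    · left; exact mul_le_mul_of_nonneg_left (by linarith) hu0
    · right
      simp only [Set.mem_setOf_eq, neg_mul, neg_le_neg_iff]
      exact mul_le_mul_of_nonneg_left (by linarith) hu0
  have hb1 : (r : ℝ) * (Real.exp u - 1) - u * ((r:ℝ) + x) ≤ (r:ℝ) * u ^ 2 - u * x := by
    have habs : |u| ≤ 1 := by rwa [abs_of_nonneg hu0]
    have h := Real.exp_bound habs (n := 2) (by norm_num)
    have h2 : Real.exp u - 1 - u ≤ u ^ 2 := by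
      have hsum : ∑ m ∈ Finset.range 2, u ^ m / m.factorial = 1 + u := by
        simp [Finset.sum_range_succ]
      rw [hsum] at h
      have := (abs_le.mp h).2
      have hu2 : |u| ^ 2 ≤ u ^ 2 := by rw [abs_of_nonneg hu0]
      norm_num at this ⊢
      nlinarith
    nlinarith [r.coe_nonneg]
  have hb2 : (r : ℝ) * (Real.exp (-u) - 1) - (-u) * ((r:ℝ) - x) ≤ (r:ℝ) * u ^ 2 - u * x := by
    have habs : |(-u)| ≤ 1 := by rwa [abs_neg, abs_of_nonneg hu0]
    have h := Real.exp_bound habs (n := 2) (by norm_num)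
    have h2 : Real.exp (-u) - 1 + u ≤ u ^ 2 := by
      have hsum : ∑ m ∈ Finset.range 2, (-u) ^ m / m.factorial = 1 - u := by
        simp [Finset.sum_range_succ]
        ring
      rw [hsum] at h
      have := (abs_le.mp h).2
      have hu2 : |(-u)| ^ 2 ≤ u ^ 2 := by rw [abs_neg, abs_of_nonneg hu0]
      norm_num at this ⊢
      nlinarith
    nlinarith [r.coe_nonneg]
  calc poissonMeasure r {k : ℕ | x ≤ |(k : ℝ) - (r : ℝ)|}
      ≤ poissonMeasure r ({k : ℕ | u * ((r:ℝ) + x) ≤ u * (k : ℝ)} ∪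
          {k : ℕ | (-u) * ((r:ℝ) - x) ≤ (-u) * (k : ℝ)}) := measure_mono hsub
  _ ≤ poissonMeasure r {k : ℕ | u * ((r:ℝ) + x) ≤ u * (k : ℝ)} +
        poissonMeasure r {k : ℕ | (-u) * ((r:ℝ) - x) ≤ (-u) * (k : ℝ)} := measure_union_le _ _
  _ ≤ ENNReal.ofReal (Real.exp ((r : ℝ) * (Real.exp u - 1) - u * ((r:ℝ) + x))) +
        ENNReal.ofReal (Real.exp ((r : ℝ) * (Real.exp (-u) - 1) - (-u) * ((r:ℝ) - x))) :=
      add_le_add (poisson_chernoff r u _) (poisson_chernoff r (-u) _)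
  _ ≤ ENNReal.ofReal (Real.exp ((r:ℝ) * u ^ 2 - u * x)) +
        ENNReal.ofReal (Real.exp ((r:ℝ) * u ^ 2 - u * x)) :=
      add_le_add (ENNReal.ofReal_le_ofReal (Real.exp_le_exp.mpr hb1))
        (ENNReal.ofReal_le_ofReal (Real.exp_le_exp.mpr hb2))
  _ = _ := by rw [← ENNReal.ofReal_add (Real.exp_pos _).le (Real.exp_pos _).le]; ring_nf

lemma grid_bound (Nf : ℝ → ℕ) (hmono : Monotone Nf) (T : ℝ) (hT : 0 < T)
    (n : ℕ) (hn : 1 ≤ n) (t : ℝ) (ht : t ∈ Set.Icc (0:ℝ) T) :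
    |(Nf ((n:ℝ) * t) : ℝ) / n - t| ≤
      ((Finset.range (n+1)).sup' Finset.nonempty_range_add_one
        (fun j => |(Nf ((j:ℝ) * T) : ℝ) - (j:ℝ) * T|) + T) / n := by
  have hn0 : (0:ℝ) < n := by exact_mod_cast hn
  have htnn : (0:ℝ) ≤ (n:ℝ) * t / T := div_nonneg (mul_nonneg hn0.le ht.1) hT.le
  set K : ℝ := (Finset.range (n+1)).sup' Finset.nonempty_range_add_one
      (fun j => |(Nf ((j:ℝ) * T) : ℝ) - (j:ℝ) * T|) with hK
  set j : ℕ := ⌊(n:ℝ) * t / T⌋₊ with hj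
  set j' : ℕ := min j (n - 1) with hj'
  have hj'n : j' + 1 ≤ n := by
    have : j' ≤ n - 1 := min_le_right _ _
    omega
  have hj'r : (j' : ℝ) ≤ j := by exact_mod_cast min_le_left _ _
  have ha : (j' : ℝ) * T ≤ (n:ℝ) * t := by
    have h1 : (j : ℝ) ≤ (n:ℝ) * t / T := Nat.floor_le htnn
    calc (j' : ℝ) * T ≤ ((n:ℝ) * t / T) * T :=
          mul_le_mul_of_nonneg_right (hj'r.trans h1) hT.le
    _ = (n:ℝ) * t := by field_simp
  have hb : (n:ℝ) * t ≤ ((j' : ℝ) + 1) * T := by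
    by_cases hcase : j ≤ n - 1
    · have hj'j : j' = j := min_eq_left hcase
      have h2 : (n:ℝ) * t / T < (j:ℝ) + 1 := Nat.lt_floor_add_one _
      rw [hj'j]
      calc (n:ℝ) * t = ((n:ℝ) * t / T) * T := by field_simp
      _ ≤ ((j:ℝ) + 1) * T := mul_le_mul_of_nonneg_right h2.le hT.le
    · have hjn : n ≤ j := by omega
      have hfl : (j : ℝ) ≤ (n:ℝ) * t / T := Nat.floor_le htnn
      have h3 : (n:ℝ) ≤ (n:ℝ) * t / T := le_trans (by exact_mod_cast hjn) hfl
      have h4 : (n:ℝ) * T ≤ (n:ℝ) * t := by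
        have := mul_le_mul_of_nonneg_right h3 hT.le
        calc (n:ℝ) * T ≤ ((n:ℝ) * t / T) * T := this
        _ = (n:ℝ) * t := by field_simp
      have h5 : T ≤ t := by nlinarith
      have ht' : t = T := le_antisymm ht.2 h5
      have hj'eq : j' = n - 1 := min_eq_right (by omega)
      have hcast : ((j' : ℝ) + 1) = (n : ℝ) := by
        rw [hj'eq]
        rw [Nat.cast_sub hn]
        push_cast
        ring
      rw [hcast, ht']
  -- monotonicity facts
  have hNa : ((Nf ((j' : ℝ) * T) : ℕ) : ℝ) ≤ (Nf ((n:ℝ) * t) : ℝ) :=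
    Nat.cast_le.mpr (hmono ha)
  have hNb : ((Nf ((n:ℝ) * t) : ℕ) : ℝ) ≤ (Nf (((j' : ℝ) + 1) * T) : ℝ) :=
    Nat.cast_le.mpr (hmono hb)
  -- sup' bounds
  have hmem1 : j' + 1 ∈ Finset.range (n+1) := Finset.mem_range.mpr (by omega)
  have hmem2 : j' ∈ Finset.range (n+1) := Finset.mem_range.mpr (by omega)
  have B1 : |(Nf (((j' : ℝ) + 1) * T) : ℝ) - ((j' : ℝ) + 1) * T| ≤ K := by
    have h := Finset.le_sup' (b := j' + 1)
      (f := fun j : ℕ => |(Nf ((j:ℝ) * T) : ℝ) - (j:ℝ) * T|) hmem1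
    push_cast at h
    exact h
  have B2 : |(Nf ((j' : ℝ) * T) : ℝ) - (j' : ℝ) * T| ≤ K := by
    have h := Finset.le_sup' (b := j')
      (f := fun j : ℕ => |(Nf ((j:ℝ) * T) : ℝ) - (j:ℝ) * T|) hmem2
    exact h
  have B1' : (Nf (((j' : ℝ) + 1) * T) : ℝ) - ((j' : ℝ) + 1) * T ≤ K :=
    le_trans (le_abs_self _) B1
  have B2' : (j' : ℝ) * T - (Nf ((j' : ℝ) * T) : ℝ) ≤ K := by
    rw [abs_sub_comm] at B2
    exact (le_abs_self _).trans B2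
  have hrw : (Nf ((n:ℝ) * t) : ℝ)/n - t = ((Nf ((n:ℝ) * t) : ℝ) - (n:ℝ) * t)/n := by
    field_simp
  have hKnn : 0 ≤ K := le_trans (abs_nonneg _) B2
  have habs : |(Nf ((n:ℝ) * t) : ℝ) - (n:ℝ) * t| ≤ K + T := by
    rw [abs_sub_le_iff]
    constructor
    · nlinarith
    · nlinarith
  rw [hrw, abs_div, abs_of_pos hn0]
  gcongr

lemma max_div_tendsto (b : ℕ → ℝ) (hb0 : ∀ j, 0 ≤ b j) {β : ℝ} (hβ : 0 < β)
    (h : ∀ ε > (0:ℝ), ∀ᶠ j in atTop, b j ≤ ε * (j:ℝ) ^ β) :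
    Filter.Tendsto (fun n : ℕ =>
      ((Finset.range (n+1)).sup' Finset.nonempty_range_add_one b) / (n:ℝ) ^ β)
      atTop (nhds 0) := by
  rw [Metric.tendsto_atTop]
  intro ε hε
  obtain ⟨J, hJ⟩ := (eventually_atTop.mp (h (ε/4) (by linarith)))
  set C : ℝ := (Finset.range (J+1)).sup' Finset.nonempty_range_add_one b with hC
  have hC0 : 0 ≤ C := le_trans (hb0 0) (Finset.le_sup' b (Finset.mem_range.mpr (by omega)))
  -- C / n^β → 0
  have hCn : Filter.Tendsto (fun n : ℕ => C / (n:ℝ) ^ β) atTop (nhds 0) := by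
    apply Tendsto.div_atTop (tendsto_const_nhds)
    exact (tendsto_rpow_atTop hβ).comp tendsto_natCast_atTop_atTop
  obtain ⟨M, hM⟩ := (Metric.tendsto_atTop.mp hCn) (ε/4) (by linarith)
  refine ⟨max M 1, fun n hn => ?_⟩
  have hn1 : 1 ≤ n := le_trans (le_max_right _ _) hn
  have hnM : M ≤ n := le_trans (le_max_left _ _) hn
  have hn0 : (0:ℝ) < (n:ℝ) ^ β := by
    have : (0:ℝ) < (n:ℝ) := by exact_mod_cast hn1
    positivity
  have hsup : (Finset.range (n+1)).sup' Finset.nonempty_range_add_one b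
      ≤ C + (ε/4) * (n:ℝ) ^ β := by
    apply Finset.sup'_le
    intro j hj
    have hjn : j ≤ n := by
      have := Finset.mem_range.mp hj; omega
    by_cases hcase : j ≤ J
    · have : b j ≤ C := Finset.le_sup' b (Finset.mem_range.mpr (by omega))
      nlinarith
    · have h1 : b j ≤ (ε/4) * (j:ℝ) ^ β := hJ j (by omega)
      have h2 : (j:ℝ) ^ β ≤ (n:ℝ) ^ β :=
        Real.rpow_le_rpow (Nat.cast_nonneg _) (by exact_mod_cast hjn) hβ.le
      nlinarith
  have hsupnn : 0 ≤ (Finset.range (n+1)).sup' Finset.nonempty_range_add_one b :=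
    le_trans (hb0 0) (Finset.le_sup' b (Finset.mem_range.mpr (by omega)))
  rw [Real.dist_eq, sub_zero, abs_of_nonneg (div_nonneg hsupnn hn0.le)]
  have hCM := hM n hnM
  rw [Real.dist_eq, sub_zero, abs_of_nonneg (div_nonneg hC0 hn0.le)] at hCM
  calc (Finset.range (n+1)).sup' Finset.nonempty_range_add_one b / (n:ℝ) ^ β
      ≤ (C + (ε/4) * (n:ℝ) ^ β) / (n:ℝ) ^ β := by gcongr
  _ = C / (n:ℝ) ^ β + ε/4 := by field_simp
  _ < ε := by linarith

end AuxSLLN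

/-- `N` is a unit-rate Poisson (counting) process on `[0,∞)`: it starts at `0`, has
nondecreasing paths, measurable marginals, Poisson-distributed increments and
independent increments. -/
def IsUnitPoissonProcess {Ω : Type*} [MeasurableSpace Ω] (P : Measure Ω)
    (N : ℝ → Ω → ℕ) : Prop :=
  (∀ ω, N 0 ω = 0) ∧
  (∀ ω, Monotone fun t => N t ω) ∧
  (∀ t, Measurable (N t)) ∧
  (∀ s t : ℝ, 0 ≤ s → s ≤ t →
    Measure.map (fun ω => N t ω - N s ω) P = poissonMeasure (Real.toNNReal (t - s))) ∧
  (∀ (n : ℕ) (tt : Fin (n + 1) → ℝ), Monotone tt → (∀ i, 0 ≤ tt i) →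
    iIndepFun
      (fun (i : Fin n) ω => N (tt i.succ) ω - N (tt i.castSucc) ω) P)

/-- Refined functional strong law of large numbers for the Poisson process: almost surely,
for every `γ ∈ [0, 1/2)`, `sup_{t ∈ [0,T]} n^γ |𝒩(nt)/n − t| → 0`. -/
theorem stmt5 {Ω : Type*} [MeasurableSpace Ω] (P : Measure Ω) [IsProbabilityMeasure P]
    (N : ℝ → Ω → ℕ) (hN : IsUnitPoissonProcess P N) (T : ℝ) (hT : 0 < T) :
    ∀ᵐ ω ∂P, ∀ γ ∈ Set.Ico (0 : ℝ) (1 / 2),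
      Filter.Tendsto
        (fun n : ℕ => ⨆ t : Set.Icc (0 : ℝ) T,
          (n : ℝ) ^ γ * |(N ((n : ℝ) * t) ω : ℝ) / (n : ℝ) - (t : ℝ)|)
        Filter.atTop (nhds 0) := by
  classical
  -- countable family of exponents
  set β : ℕ → ℝ := fun k => 1/2 + 1/((k:ℝ)+3) with hβdef
  have hβhalf : ∀ k, 1/2 < β k := by
    intro k
    have : (0:ℝ) < 1/((k:ℝ)+3) := by positivity
    simp only [hβdef]; linarith
  have hβone : ∀ k, β k ≤ 1 := by
    intro k
    have h3 : (3:ℝ) ≤ (k:ℝ)+3 := by have := Nat.cast_nonneg (α := ℝ) k; linarith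
    have : 1/((k:ℝ)+3) ≤ 1/3 := by
      apply one_div_le_one_div_of_le <;> linarith
    simp only [hβdef]; linarith
  -- the bad events
  set E : ℕ → ℕ → ℕ → Set Ω := fun k m j =>
    {ω | (1/((m:ℝ)+1)) * (j:ℝ) ^ (β k) ≤ |(N ((j:ℝ)*T) ω : ℝ) - (j:ℝ)*T|} with hEdef
  -- identification of the law of N(jT)
  have hmap : ∀ s : ℝ, 0 ≤ s → Measure.map (N s) P = poissonMeasure s.toNNReal := by
    intro s hs
    have h := hN.2.2.2.1 0 s le_rfl hs
    have hfun : (fun ω => N s ω - N 0 ω) = N s := by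
      funext ω; rw [hN.1 ω, Nat.sub_zero]
    rw [hfun, sub_zero] at h
    exact h
  -- summability of bad-event probabilities
  have hsum : ∀ k m : ℕ, (∑' j : ℕ, P (E k m j)) ≠ ∞ := by
    intro k m
    set ε : ℝ := 1/((m:ℝ)+1) with hεdef
    have hε : 0 < ε := by positivity
    set c0 : ℝ := min 1 (ε/(2*T)) with hc0def
    have hc0 : 0 < c0 := lt_min one_pos (by positivity)
    have hc01 : c0 ≤ 1 := min_le_left _ _
    have hc0T : T * c0 ≤ ε/2 := by
      have : c0 ≤ ε/(2*T) := min_le_right _ _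
      calc T * c0 ≤ T * (ε/(2*T)) := by nlinarith
      _ = ε/2 := by field_simp
    set δ : ℝ := 2*(β k) - 1 with hδdef
    have hδ : 0 < δ := by
      have h3 : (0:ℝ) < 1/((k:ℝ)+3) := by positivity
      have h4 : δ = 2 * (1/((k:ℝ)+3)) + 0 := by simp only [hδdef, hβdef]; ring
      rw [h4]
      linarith
    set K : ℝ := c0*ε/2 with hKdef
    have hK : 0 < K := by positivity
    have claim : ∀ j : ℕ, P (E k m j) ≤ ENNReal.ofReal (2 * Real.exp (-(K * (j:ℝ) ^ δ))) := by
      intro j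
      rcases Nat.eq_zero_or_pos j with hj0 | hj1
      · subst hj0
        have h0 : ((0:ℕ):ℝ) ^ δ = 0 := by
          rw [Nat.cast_zero]; exact Real.zero_rpow hδ.ne'
        rw [h0, mul_zero, neg_zero, Real.exp_zero, mul_one]
        calc P (E k m 0) ≤ 1 := prob_le_one
        _ ≤ ENNReal.ofReal 2 := by
              rw [show (1:ℝ≥0∞) = ENNReal.ofReal 1 by simp]
              exact ENNReal.ofReal_le_ofReal (by norm_num)
      · have ha0 : (0:ℝ) < (j:ℝ) := by exact_mod_cast hj1
        have ha1 : (1:ℝ) ≤ (j:ℝ) := by exact_mod_cast hj1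
        set r : ℝ≥0 := ((j:ℝ)*T).toNNReal with hrdef
        have hr : (r:ℝ) = (j:ℝ)*T := Real.coe_toNNReal _ (by positivity)
        set x : ℝ := ε * (j:ℝ) ^ (β k) with hxdef
        set u : ℝ := c0 * (j:ℝ) ^ (β k - 1) with hudef
        have hu0 : 0 ≤ u := by positivity
        have hu1 : u ≤ 1 := by
          have h1 : (j:ℝ) ^ (β k - 1) ≤ 1 :=
            Real.rpow_le_one_of_one_le_of_nonpos ha1 (by have := hβone k; linarith)
          calc u ≤ 1 * 1 := by
                simp only [hudef]
                apply mul_le_mul hc01 h1 (by positivity) zero_le_one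
          _ = 1 := mul_one 1
        have hE : E k m j = (N ((j:ℝ)*T)) ⁻¹' {kk : ℕ | x ≤ |(kk:ℝ) - (r:ℝ)|} := by
          ext ω
          simp only [hEdef, Set.mem_setOf_eq, Set.mem_preimage, hr, hxdef, hεdef]
        have hPE : P (E k m j) = poissonMeasure r {kk : ℕ | x ≤ |(kk:ℝ) - (r:ℝ)|} := by
          rw [hE, ← hmap ((j:ℝ)*T) (by positivity),
            Measure.map_apply (hN.2.2.1 _) (MeasurableSet.of_discrete)]
        rw [hPE]
        refine le_trans (poisson_two_sided r x u hu0 hu1) (ENNReal.ofReal_le_ofReal ?_)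
        have hexp : (r:ℝ) * u^2 - u*x ≤ -(K * (j:ℝ)^δ) := by
          set a : ℝ := (j:ℝ) with hadef
          have e0 : a ^ (β k - 1) * a ^ (β k) = a ^ δ := by
            rw [← Real.rpow_add ha0]; congr 1; simp only [hδdef]; ring
          have e1 : a * (a ^ (β k - 1) * a ^ (β k - 1)) = a ^ δ := by
            calc a * (a ^ (β k - 1) * a ^ (β k - 1))
                = a^(1:ℝ) * a^((β k - 1) + (β k - 1)) := by
                  rw [Real.rpow_one, Real.rpow_add ha0]
            _ = a ^ (1 + ((β k - 1) + (β k - 1))) := (Real.rpow_add ha0 _ _).symm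
            _ = a ^ δ := by congr 1; simp only [hδdef]; ring
          have hru : (r:ℝ) * u^2 = T * c0^2 * (a^δ) := by
            rw [hr, hudef]
            calc (a*T) * (c0 * a ^ (β k - 1))^2
                = T * c0^2 * (a * (a ^ (β k - 1) * a ^ (β k - 1))) := by ring
            _ = T * c0^2 * (a^δ) := by rw [e1]
          have hux : u * x = c0 * ε * (a^δ) := by
            rw [hudef, hxdef]
            calc (c0 * a ^ (β k - 1)) * (ε * a ^ (β k))
                = c0 * ε * (a ^ (β k - 1) * a ^ (β k)) := by ring
            _ = c0 * ε * (a^δ) := by rw [e0]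
          rw [hru, hux, hKdef]
          have hδnn : 0 ≤ a^δ := Real.rpow_nonneg ha0.le _
          nlinarith [mul_le_mul_of_nonneg_right hc0T (mul_nonneg hc0.le hδnn)]
        nlinarith [Real.exp_le_exp.mpr hexp, Real.exp_pos ((r:ℝ) * u^2 - u*x),
          Real.exp_pos (-(K * (j:ℝ)^δ))]
    have hsummable : Summable (fun j : ℕ => 2 * Real.exp (-(K * (j:ℝ) ^ δ))) :=
      (summable_exp_neg_K_rpow hK hδ).mul_left 2
    have hle : (∑' j : ℕ, P (E k m j)) ≤
        ENNReal.ofReal (∑' j : ℕ, 2 * Real.exp (-(K * (j:ℝ) ^ δ))) := by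
      calc (∑' j : ℕ, P (E k m j))
          ≤ ∑' j : ℕ, ENNReal.ofReal (2 * Real.exp (-(K * (j:ℝ) ^ δ))) :=
            ENNReal.tsum_le_tsum claim
      _ = ENNReal.ofReal (∑' j : ℕ, 2 * Real.exp (-(K * (j:ℝ) ^ δ))) :=
            (ENNReal.ofReal_tsum_of_nonneg (fun j => by positivity) hsummable).symm
    exact ne_top_of_le_ne_top ENNReal.ofReal_ne_top hle
  have hAE : ∀ᵐ ω ∂P, ∀ k m : ℕ, ∀ᶠ j in atTop, ω ∉ E k m j :=
    ae_all_iff.mpr fun k => ae_all_iff.mpr fun m =>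
      MeasureTheory.ae_eventually_notMem (hsum k m)
  -- deterministic part
  filter_upwards [hAE] with ω hω
  intro γ hγ
  obtain ⟨hγ0, hγhalf⟩ := hγ
  set b : ℕ → ℝ := fun j => |(N ((j:ℝ)*T) ω : ℝ) - (j:ℝ)*T| with hbdef
  have hb0 : ∀ j, 0 ≤ b j := fun j => abs_nonneg _
  set βγ : ℝ := 1 - γ with hβγdef
  have hβγhalf : 1/2 < βγ := by simp only [hβγdef]; linarith
  have hβγpos : 0 < βγ := by linarith
  have hβγ1 : βγ ≤ 1 := by simp only [hβγdef]; linarith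
  -- the eventual smallness of b
  have hb : ∀ ε > (0:ℝ), ∀ᶠ j in atTop, b j ≤ ε * (j:ℝ) ^ βγ := by
    intro ε hε
    obtain ⟨k, hk⟩ := exists_nat_gt (1/(βγ - 1/2))
    have hkb : β k ≤ βγ := by
      have hpos : 0 < βγ - 1/2 := by linarith
      have h1 : 1/((k:ℝ)+3) ≤ βγ - 1/2 := by
        rw [div_le_iff₀ (by positivity)]
        have h2 : 1/(βγ - 1/2) ≤ (k:ℝ) := hk.le
        rw [div_le_iff₀ hpos] at h2
        nlinarith
      simp only [hβdef]; linarith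
    obtain ⟨m, hm⟩ := exists_nat_gt (1/ε)
    have hmε : 1/((m:ℝ)+1) ≤ ε := by
      have hm0 : (0:ℝ) < (m:ℝ)+1 := by positivity
      rw [div_le_iff₀ hm0]
      rw [div_lt_iff₀ hε] at hm
      nlinarith
    filter_upwards [hω k m, eventually_ge_atTop 1] with j hj hj1
    have hj1' : (1:ℝ) ≤ (j:ℝ) := by exact_mod_cast hj1
    have hnot : ¬ ((1/((m:ℝ)+1)) * (j:ℝ) ^ (β k) ≤ b j) := hj
    push_neg at hnot
    have h2 : (j:ℝ) ^ (β k) ≤ (j:ℝ) ^ βγ :=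
      Real.rpow_le_rpow_of_exponent_le hj1' hkb
    calc b j ≤ (1/((m:ℝ)+1)) * (j:ℝ) ^ (β k) := hnot.le
    _ ≤ ε * (j:ℝ) ^ βγ := by
        apply mul_le_mul hmε h2 (Real.rpow_nonneg (by positivity) _) hε.le
  -- limit of the grid maxima
  set Kn : ℕ → ℝ := fun n =>
    (Finset.range (n+1)).sup' Finset.nonempty_range_add_one b with hKndef
  have hmax : Filter.Tendsto (fun n : ℕ => Kn n / (n:ℝ) ^ βγ) atTop (nhds 0) :=
    max_div_tendsto b hb0 hβγpos hb
  have hTn : Filter.Tendsto (fun n : ℕ => T / (n:ℝ) ^ βγ) atTop (nhds 0) := by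
    apply Tendsto.div_atTop tendsto_const_nhds
    exact (tendsto_rpow_atTop hβγpos).comp tendsto_natCast_atTop_atTop
  have hbound : Filter.Tendsto (fun n : ℕ => (Kn n + T) / (n:ℝ) ^ βγ) atTop (nhds 0) := by
    have := hmax.add hTn
    rw [add_zero] at this
    refine this.congr fun n => ?_
    rw [← add_div]
  -- squeeze
  haveI : Nonempty (Set.Icc (0:ℝ) T) := ⟨⟨0, le_refl 0, hT.le⟩⟩
  apply squeeze_zero' (f := fun n : ℕ => ⨆ t : Set.Icc (0 : ℝ) T,
      (n : ℝ) ^ γ * |(N ((n : ℝ) * t) ω : ℝ) / (n : ℝ) - (t : ℝ)|)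
    (g := fun n : ℕ => (Kn n + T) / (n:ℝ) ^ βγ) ?_ ?_ hbound
  · -- eventual nonnegativity
    filter_upwards [eventually_ge_atTop 1] with n hn
    have hn0 : (0:ℝ) < (n:ℝ) := by exact_mod_cast hn
    have hptwise : ∀ t : Set.Icc (0:ℝ) T,
        (n : ℝ) ^ γ * |(N ((n : ℝ) * t) ω : ℝ) / (n : ℝ) - (t : ℝ)| ≤
          (Kn n + T) / (n:ℝ) ^ βγ := by
      intro t
      have hgrid := grid_bound (fun s => N s ω) (hN.2.1 ω) T hT n hn t t.2
      have hmul : (n:ℝ)^γ * (n:ℝ)^βγ = (n:ℝ) := by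
        rw [← Real.rpow_add hn0]
        simp only [hβγdef]
        rw [show γ + (1 - γ) = 1 by ring, Real.rpow_one]
      have hγpow : (0:ℝ) < (n:ℝ)^γ := Real.rpow_pos_of_pos hn0 _
      have hβγpow : (0:ℝ) < (n:ℝ)^βγ := Real.rpow_pos_of_pos hn0 _
      have heq : (Kn n + T) / (n:ℝ)^βγ = (n:ℝ)^γ * ((Kn n + T) / n) := by
        rw [mul_div_assoc', div_eq_div_iff hβγpow.ne' hn0.ne']
        calc (Kn n + T) * (n:ℝ) = (Kn n + T) * ((n:ℝ)^γ * (n:ℝ)^βγ) := by rw [hmul]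
        _ = (n:ℝ)^γ * (Kn n + T) * (n:ℝ)^βγ := by ring
      rw [heq]
      exact mul_le_mul_of_nonneg_left hgrid hγpow.le
    have hBdd : BddAbove (Set.range fun t : Set.Icc (0:ℝ) T =>
        (n : ℝ) ^ γ * |(N ((n : ℝ) * t) ω : ℝ) / (n : ℝ) - (t : ℝ)|) := by
      refine ⟨(Kn n + T) / (n:ℝ) ^ βγ, ?_⟩
      rintro y ⟨t, rfl⟩
      exact hptwise t
    have h0 := le_ciSup hBdd (⟨0, le_refl 0, hT.le⟩ : Set.Icc (0:ℝ) T)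
    refine le_trans (le_of_eq ?_) h0
    have : N ((n:ℝ) * ((⟨0, le_refl 0, hT.le⟩ : Set.Icc (0:ℝ) T) : ℝ)) ω = 0 := by
      simp only [mul_zero]
      exact hN.1 ω
    rw [this]
    simp
  · -- eventual upper bound
    filter_upwards [eventually_ge_atTop 1] with n hn
    have hn0 : (0:ℝ) < (n:ℝ) := by exact_mod_cast hn
    have hptwise : ∀ t : Set.Icc (0:ℝ) T,
        (n : ℝ) ^ γ * |(N ((n : ℝ) * t) ω : ℝ) / (n : ℝ) - (t : ℝ)| ≤
          (Kn n + T) / (n:ℝ) ^ βγ := by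
      intro t
      have hgrid := grid_bound (fun s => N s ω) (hN.2.1 ω) T hT n hn t t.2
      have hmul : (n:ℝ)^γ * (n:ℝ)^βγ = (n:ℝ) := by
        rw [← Real.rpow_add hn0]
        simp only [hβγdef]
        rw [show γ + (1 - γ) = 1 by ring, Real.rpow_one]
      have hγpow : (0:ℝ) < (n:ℝ)^γ := Real.rpow_pos_of_pos hn0 _
      have hβγpow : (0:ℝ) < (n:ℝ)^βγ := Real.rpow_pos_of_pos hn0 _
      have heq : (Kn n + T) / (n:ℝ)^βγ = (n:ℝ)^γ * ((Kn n + T) / n) := by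
        rw [mul_div_assoc', div_eq_div_iff hβγpow.ne' hn0.ne']
        calc (Kn n + T) * (n:ℝ) = (Kn n + T) * ((n:ℝ)^γ * (n:ℝ)^βγ) := by rw [hmul]
        _ = (n:ℝ)^γ * (Kn n + T) * (n:ℝ)^βγ := by ring
      rw [heq]
      exact mul_le_mul_of_nonneg_left hgrid hγpow.le
    exact ciSup_le hptwise
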